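/- Let P be a generic convex polygon with n ≥ 5 vertices and let E(P) be its evolute. Then the number N of locally extremal vertices of P satisfies N = 2·wind(P) − 2·wind(E(P)), where wind denotes the discrete winding number. -/

import Mathlib

open EuclideanGeometry
open scoped Classical

noncomputable section

/-- The Euclidean plane. -/
abbrev Pt := EuclideanSpace ℝ (Fin 2)

/-- Signed area determinant of the triangle `a b c` (positive iff `a b c` is
counterclockwise, i.e. `c` lies strictly to the left of the directed line `a → b`). -/
def det2 (a b c : Pt) : ℝ :=
  (b 0 - a 0) * (c 1 - a 1) - (b 1 - a 1) * (c 0 - a 0)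

/-- The vertices `V 0, V 1, …, V (n-1)` (indices mod `n`) are distinct and in convex
position, listed counterclockwise: every other vertex lies strictly to the left of
each directed edge. -/
def ConvexCCW {n : ℕ} (V : ZMod n → Pt) : Prop :=
  Function.Injective V ∧
    ∀ i j : ZMod n, j ≠ i → j ≠ i + 1 → 0 < det2 (V i) (V (i + 1)) (V j)

/-- The polygon is generic: no three vertices are collinear and no four vertices lie
on a common circle. -/
def GenericPoly {n : ℕ} (V : ZMod n → Pt) : Prop :=
  (∀ i j k : ZMod n, i ≠ j → j ≠ k → i ≠ k →
      ¬ Collinear ℝ ({V i, V j, V k} : Set Pt)) ∧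
  (∀ i j k l : ZMod n, i ≠ j → i ≠ k → i ≠ l → j ≠ k → j ≠ l → k ≠ l →
      ¬ ∃ (O : Pt) (R : ℝ),
        dist (V i) O = R ∧ dist (V j) O = R ∧ dist (V k) O = R ∧ dist (V l) O = R)

/-- `O i` is the center and `R i` the radius of the circle `C i` through
`V (i-1)`, `V i`, `V (i+1)`. -/
def IsCircumData {n : ℕ} (V O : ZMod n → Pt) (R : ZMod n → ℝ) : Prop :=
  ∀ i : ZMod n,
    dist (V (i - 1)) (O i) = R i ∧ dist (V i) (O i) = R i ∧
      dist (V (i + 1)) (O i) = R i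

/-- The polygon is coherent: each circumcenter `O i` lies in the closed infinite cone
with apex `V i` spanned by the rays from `V i` through `V (i-1)` and `V (i+1)`. -/
def Coherent {n : ℕ} (V O : ZMod n → Pt) : Prop :=
  ∀ i : ZMod n, ∃ s t : ℝ, 0 ≤ s ∧ 0 ≤ t ∧
    O i - V i = s • (V (i - 1) - V i) + t • (V (i + 1) - V i)

/-- `V i` is locally maximal-extremal: `V (i-2)` and `V (i+2)` lie strictly outside `C i`. -/
def LocMax {n : ℕ} (V O : ZMod n → Pt) (R : ZMod n → ℝ) (i : ZMod n) : Prop :=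
  R i < dist (V (i - 2)) (O i) ∧ R i < dist (V (i + 2)) (O i)

/-- `V i` is locally minimal-extremal: `V (i-2)` and `V (i+2)` lie strictly inside `C i`. -/
def LocMin {n : ℕ} (V O : ZMod n → Pt) (R : ZMod n → ℝ) (i : ZMod n) : Prop :=
  dist (V (i - 2)) (O i) < R i ∧ dist (V (i + 2)) (O i) < R i

/-- `V i` is globally maximal-extremal: the open disk bounded by `C i` contains no vertex. -/
def GlobMax {n : ℕ} (V O : ZMod n → Pt) (R : ZMod n → ℝ) (i : ZMod n) : Prop :=
  ∀ j : ZMod n, R i ≤ dist (V j) (O i)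

/-- `V i` is globally minimal-extremal: the open disk bounded by `C i` contains every
vertex other than `V (i-1)`, `V i`, `V (i+1)`. -/
def GlobMin {n : ℕ} (V O : ZMod n → Pt) (R : ZMod n → ℝ) (i : ZMod n) : Prop :=
  ∀ j : ZMod n, j ≠ i - 1 → j ≠ i → j ≠ i + 1 → dist (V j) (O i) < R i

/-- `V i` is radially maximal-extremal: `R (i-1) < R i > R (i+1)`. -/
def RadMax {n : ℕ} (R : ZMod n → ℝ) (i : ZMod n) : Prop :=
  R (i - 1) < R i ∧ R (i + 1) < R i

/-- `V i` is radially minimal-extremal: `R (i-1) > R i < R (i+1)`. -/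
def RadMin {n : ℕ} (R : ZMod n → ℝ) (i : ZMod n) : Prop :=
  R i < R (i - 1) ∧ R i < R (i + 1)

end

noncomputable section

/-- The angle of a closed polygon at the middle vertex `b` (coming from `a`, leaving
towards `c`), measured on the left-hand side with respect to the direction of
traversal; it equals the unsigned angle `∠ a b c` when the traversal turns left at `b`
and `2π - ∠ a b c` when it turns right. -/
def leftAngle (a b c : Pt) : ℝ :=
  if 0 < det2 a b c then EuclideanGeometry.angle a b c
  else 2 * Real.pi - EuclideanGeometry.angle a b c

/-- The discrete winding number of the closed polygon with vertex sequence `W`: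
`wind(W) = (1/2π) ∑ᵢ (π - ∠Wᵢ)`. -/
def wind {n : ℕ} [NeZero n] (W : ZMod n → Pt) : ℝ :=
  (1 / (2 * Real.pi)) *
    ∑ i : ZMod n, (Real.pi - leftAngle (W (i - 1)) (W i) (W (i + 1)))

end


/-! ### Auxiliary machinery for the proof -/

open scoped RealInnerProductSpace

noncomputable section EvoluteAux

/-- The "Kähler" complex number attached to two plane vectors: inner product plus
`i` times the cross product. Its argument is the signed angle from `u` to `w`. -/
def Kc (u w : Pt) : ℂ :=
  ((u 0 * w 0 + u 1 * w 1 : ℝ) : ℂ) + ((u 0 * w 1 - u 1 * w 0 : ℝ) : ℂ) * Complex.I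

lemma Kc_re (u w : Pt) : (Kc u w).re = u 0 * w 0 + u 1 * w 1 := by simp [Kc]
lemma Kc_im (u w : Pt) : (Kc u w).im = u 0 * w 1 - u 1 * w 0 := by simp [Kc]

lemma inner_coords (x y : Pt) : ⟪x, y⟫ = x 0 * y 0 + x 1 * y 1 := by
  simp [PiLp.inner_apply, Fin.sum_univ_two, RCLike.inner_apply]; ring

lemma norm_coords (x : Pt) : ‖x‖ = Real.sqrt ((x 0)^2 + (x 1)^2) := by
  rw [EuclideanSpace.norm_eq]; simp [Fin.sum_univ_two, sq_abs]

lemma abs_Kc (u w : Pt) : ‖Kc u w‖ = ‖u‖ * ‖w‖ := by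
  rw [Complex.norm_def, Complex.normSq_apply, Kc_re, Kc_im, norm_coords, norm_coords,
    ← Real.sqrt_mul (by positivity)]
  congr 1; ring

lemma im_Kc_edges (a b c : Pt) : (Kc (b - a) (c - b)).im = det2 a b c := by
  simp only [Kc_im, det2, PiLp.sub_apply]; ring

lemma re_Kc (u w : Pt) : (Kc u w).re = ⟪u, w⟫ := by rw [Kc_re, inner_coords]

lemma turn_eq (a b c : Pt) (h : det2 a b c ≠ 0) :
    Real.pi - leftAngle a b c = (Kc (b - a) (c - b)).arg := by
  have him : (Kc (b - a) (c - b)).im = det2 a b c := im_Kc_edges a b c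
  have hang : EuclideanGeometry.angle a b c
      = Real.pi - Real.arccos (⟪b - a, c - b⟫ / (‖b - a‖ * ‖c - b‖)) := by
    show InnerProductGeometry.angle (a - b) (c - b) = _
    have hab : a - b = -(b - a) := by abel
    rw [hab, InnerProductGeometry.angle, inner_neg_left, norm_neg, neg_div, Real.arccos_neg]
  rcases h.lt_or_gt with hneg | hpos
  · have him' : (Kc (b - a) (c - b)).im < 0 := him ▸ hneg
    rw [leftAngle, if_neg (by linarith), hang, Complex.arg_of_im_neg him', re_Kc, abs_Kc]
    ring
  · have him' : 0 < (Kc (b - a) (c - b)).im := him ▸ hpos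
    rw [leftAngle, if_pos hpos, hang, Complex.arg_of_im_pos him', re_Kc, abs_Kc]
    ring

lemma arg_real_mul' (c : ℝ) (hc : c ≠ 0) (z : ℂ) (hz : 0 < z.im) :
    ((c : ℂ) * z).arg = if c < 0 then z.arg - Real.pi else z.arg := by
  rcases hc.lt_or_gt with hneg | hpos
  · rw [if_pos hneg]
    have : (c : ℂ) * z = ((-c : ℝ) : ℂ) * (-z) := by push_cast; ring
    rw [this, Complex.arg_real_mul _ (by linarith), Complex.arg_neg_eq_arg_sub_pi_of_im_pos hz]
  · rw [if_neg (not_lt.2 hpos.le), Complex.arg_real_mul _ hpos]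

lemma Kc_smulJ (a b : ℝ) (u v w w' : Pt)
    (hw0 : w 0 = a * (-(u 1))) (hw1 : w 1 = a * u 0)
    (hw0' : w' 0 = b * (-(v 1))) (hw1' : w' 1 = b * v 0) :
    Kc w w' = ((a * b : ℝ) : ℂ) * Kc u v := by
  unfold Kc; rw [hw0, hw1, hw0', hw1']; push_cast; ring

lemma dsq (x y : Pt) : dist x y ^ 2 = (x 0 - y 0)^2 + (x 1 - y 1)^2 := by
  rw [EuclideanSpace.dist_eq, Real.sq_sqrt (by positivity)]
  simp [Fin.sum_univ_two, Real.dist_eq, sq_abs]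

lemma edge_decomp (A B O O' : Pt) (r r' : ℝ)
    (h1 : dist A O = r) (h2 : dist B O = r) (h3 : dist A O' = r') (h4 : dist B O' = r')
    (hAB : (B 0 - A 0)^2 + (B 1 - A 1)^2 ≠ 0) :
    ∃ μ : ℝ, (O' - O) 0 = μ * (-(B 1 - A 1)) ∧ (O' - O) 1 = μ * (B 0 - A 0) := by
  have e1 := dsq A O; rw [h1] at e1
  have e2 := dsq B O; rw [h2] at e2
  have e3 := dsq A O'; rw [h3] at e3
  have e4 := dsq B O'; rw [h4] at e4
  have hperp : (O' 0 - O 0) * (B 0 - A 0) + (O' 1 - O 1) * (B 1 - A 1) = 0 := by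
    linarith [e1, e2, e3, e4]
  refine ⟨((O' 1 - O 1) * (B 0 - A 0) - (O' 0 - O 0) * (B 1 - A 1)) /
      ((B 0 - A 0)^2 + (B 1 - A 1)^2), ?_, ?_⟩
  · simp only [PiLp.sub_apply]
    rw [div_mul_eq_mul_div, eq_div_iff hAB]
    linear_combination (B 0 - A 0) * hperp
  · simp only [PiLp.sub_apply]
    rw [div_mul_eq_mul_div, eq_div_iff hAB]
    linear_combination (B 1 - A 1) * hperp

lemma power_diff (A B X O O' : Pt) (r r' μ : ℝ)
    (h1 : dist A O = r) (h3 : dist A O' = r') (h5 : dist X O' = r')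
    (hw0 : (O' - O) 0 = μ * (-(B 1 - A 1))) (hw1 : (O' - O) 1 = μ * (B 0 - A 0)) :
    dist X O ^ 2 - r ^ 2 = 2 * μ * det2 A B X := by
  have e1 := dsq A O; rw [h1] at e1
  have e3 := dsq A O'; rw [h3] at e3
  have e5 := dsq X O'; rw [h5] at e5
  have w0 : O' 0 - O 0 = μ * (-(B 1 - A 1)) := by simpa using hw0
  have w1 : O' 1 - O 1 = μ * (B 0 - A 0) := by simpa using hw1
  rw [dsq, det2]
  linear_combination (-1) * e1 + e3 - e5 + (2 * X 0 - 2 * A 0) * w0 + (2 * X 1 - 2 * A 1) * w1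

lemma power_diff' (A B Y O O' : Pt) (r r' μ : ℝ)
    (h1 : dist A O = r) (h3 : dist A O' = r') (hY : dist Y O = r)
    (hw0 : (O' - O) 0 = μ * (-(B 1 - A 1))) (hw1 : (O' - O) 1 = μ * (B 0 - A 0)) :
    dist Y O' ^ 2 - r' ^ 2 = -(2 * μ * det2 A B Y) := by
  have e1 := dsq A O; rw [h1] at e1
  have e3 := dsq A O'; rw [h3] at e3
  have eY := dsq Y O; rw [hY] at eY
  have w0 : O' 0 - O 0 = μ * (-(B 1 - A 1)) := by simpa using hw0
  have w1 : O' 1 - O 1 = μ * (B 0 - A 0) := by simpa using hw1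
  rw [dsq, det2]
  linear_combination (-1) * e3 + e1 - eY - (2 * Y 0 - 2 * A 0) * w0 - (2 * Y 1 - 2 * A 1) * w1

end EvoluteAux


/-- For a generic convex polygon `P` with `n ≥ 5` vertices, the number `N` of locally
extremal vertices satisfies `N = 2·wind(P) - 2·wind(E(P))`, where `E(P)` is the evolute
(the closed polygon of circumcenters `O`). -/

theorem extremal_count_eq_winding_difference
    (n : ℕ) [NeZero n] (hn : 5 ≤ n)
    (V O : ZMod n → Pt) (R : ZMod n → ℝ)
    (hconv : ConvexCCW V) (hgen : GenericPoly V) (hcirc : IsCircumData V O R) :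
    ({i : ZMod n | LocMax V O R i ∨ LocMin V O R i}.ncard : ℝ) =
      2 * wind V - 2 * wind O := by
  classical
  obtain ⟨hinj, hccw⟩ := hconv
  -- small nonzero elements of `ZMod n`
  have hk : ∀ k : ℕ, 0 < k → k < 5 → ((k : ZMod n) ≠ 0) := by
    intro k hk0 hk5 h
    have hdvd := (ZMod.natCast_eq_zero_iff k n).1 h
    have := Nat.le_of_dvd hk0 hdvd
    omega
  have h1 : (1 : ZMod n) ≠ 0 := by
    have := hk 1 one_pos (by norm_num); simpa using this
  have h2 : (2 : ZMod n) ≠ 0 := by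
    have := hk 2 (by norm_num) (by norm_num); push_cast at this; exact this
  have h3 : (3 : ZMod n) ≠ 0 := by
    have := hk 3 (by norm_num) (by norm_num); push_cast at this; exact this
  have hne : ∀ a b : ZMod n, a - b ≠ 0 → a ≠ b := fun a b h e => h (by rw [e, sub_self])
  -- circumcircle data
  have hC1 : ∀ i, dist (V (i - 1)) (O i) = R i := fun i => (hcirc i).1
  have hC2 : ∀ i, dist (V i) (O i) = R i := fun i => (hcirc i).2.1
  have hC3 : ∀ i, dist (V (i + 1)) (O i) = R i := fun i => (hcirc i).2.2
  have hC1' : ∀ i, dist (V i) (O (i + 1)) = R (i + 1) := fun i => by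
    have := hC1 (i + 1); rwa [show i + 1 - 1 = i by ring] at this
  have hC3' : ∀ i, dist (V (i + 2)) (O (i + 1)) = R (i + 1) := fun i => by
    have := hC3 (i + 1); rwa [show i + 1 + 1 = i + 2 by ring] at this
  have hR0 : ∀ i, 0 ≤ R i := fun i => (hC2 i) ▸ dist_nonneg
  -- edges are nonzero
  have hu2 : ∀ i : ZMod n, (V (i + 1) 0 - V i 0)^2 + (V (i + 1) 1 - V i 1)^2 ≠ 0 := by
    intro i h
    have h0 : V (i + 1) 0 = V i 0 := by nlinarith [sq_nonneg (V (i + 1) 0 - V i 0), sq_nonneg (V (i + 1) 1 - V i 1)]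
    have h1' : V (i + 1) 1 = V i 1 := by nlinarith [sq_nonneg (V (i + 1) 0 - V i 0), sq_nonneg (V (i + 1) 1 - V i 1)]
    have : V (i + 1) = V i := by
      ext j; fin_cases j
      · exact h0
      · exact h1'
    exact hne (i + 1) i (by rw [show i + 1 - i = (1 : ZMod n) by ring]; exact h1) (hinj this)
  -- the scalars μ i with O (i+1) - O i = μ i • J (edge i)
  have hex : ∀ i : ZMod n, ∃ μ : ℝ,
      (O (i + 1) - O i) 0 = μ * (-(V (i + 1) 1 - V i 1)) ∧
      (O (i + 1) - O i) 1 = μ * (V (i + 1) 0 - V i 0) :=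
    fun i => edge_decomp (V i) (V (i + 1)) (O i) (O (i + 1)) (R i) (R (i + 1))
      (hC2 i) (hC3 i) (hC1' i) (hC2 (i + 1)) (hu2 i)
  choose μ hμ0 hμ1 using hex
  -- convexity determinants
  have hd2 : ∀ i, 0 < det2 (V i) (V (i + 1)) (V (i + 2)) := fun i =>
    hccw i (i + 2) (hne _ _ (by rw [show i + 2 - i = (2 : ZMod n) by ring]; exact h2))
      (hne _ _ (by rw [show i + 2 - (i + 1) = (1 : ZMod n) by ring]; exact h1))
  have hdm : ∀ i, 0 < det2 (V i) (V (i + 1)) (V (i - 1)) := fun i =>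
    hccw i (i - 1) (hne _ _ (by rw [show i - 1 - i = -(1 : ZMod n) by ring]; exact neg_ne_zero.2 h1))
      (hne _ _ (by rw [show i - 1 - (i + 1) = -(2 : ZMod n) by ring]; exact neg_ne_zero.2 h2))
  have hdd : ∀ i, 0 < det2 (V (i - 1)) (V i) (V (i + 1)) := fun i => by
    have := hccw (i - 1) (i + 1)
      (hne _ _ (by rw [show i + 1 - (i - 1) = (2 : ZMod n) by ring]; exact h2))
      (hne _ _ (by rw [show i + 1 - (i - 1 + 1) = (1 : ZMod n) by ring]; exact h1))
    rwa [show i - 1 + 1 = i by ring] at this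
  -- key power-of-a-point identities
  have keyA : ∀ i, dist (V (i + 2)) (O i) ^ 2 - R i ^ 2
      = 2 * μ i * det2 (V i) (V (i + 1)) (V (i + 2)) := fun i =>
    power_diff (V i) (V (i + 1)) (V (i + 2)) (O i) (O (i + 1)) (R i) (R (i + 1)) (μ i)
      (hC2 i) (hC1' i) (hC3' i) (hμ0 i) (hμ1 i)
  have keyB : ∀ i, dist (V (i - 1)) (O (i + 1)) ^ 2 - R (i + 1) ^ 2
      = -(2 * μ i * det2 (V i) (V (i + 1)) (V (i - 1))) := fun i =>
    power_diff' (V i) (V (i + 1)) (V (i - 1)) (O i) (O (i + 1)) (R i) (R (i + 1)) (μ i)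
      (hC2 i) (hC1' i) (hC1 i) (hμ0 i) (hμ1 i)
  -- μ never vanishes (genericity)
  have hμne : ∀ i, μ i ≠ 0 := by
    intro i h0
    have hOO : O (i + 1) = O i := by
      have e0 := hμ0 i; have e1 := hμ1 i
      rw [h0, zero_mul] at e0 e1
      simp only [PiLp.sub_apply, sub_eq_zero] at e0 e1
      ext j; fin_cases j
      · exact e0
      · exact e1
    have hRR : R (i + 1) = R i := by rw [← hC1' i, hOO, hC2 i]
    refine hgen.2 (i - 1) i (i + 1) (i + 2) ?_ ?_ ?_ ?_ ?_ ?_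
      ⟨O i, R i, hC1 i, hC2 i, hC3 i, by rw [← hRR, ← hOO]; exact hC3' i⟩
    · exact hne _ _ (by rw [show i - 1 - i = -(1 : ZMod n) by ring]; exact neg_ne_zero.2 h1)
    · exact hne _ _ (by rw [show i - 1 - (i + 1) = -(2 : ZMod n) by ring]; exact neg_ne_zero.2 h2)
    · exact hne _ _ (by rw [show i - 1 - (i + 2) = -(3 : ZMod n) by ring]; exact neg_ne_zero.2 h3)
    · exact hne _ _ (by rw [show i - (i + 1) = -(1 : ZMod n) by ring]; exact neg_ne_zero.2 h1)
    · exact hne _ _ (by rw [show i - (i + 2) = -(2 : ZMod n) by ring]; exact neg_ne_zero.2 h2)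
    · exact hne _ _ (by rw [show i + 1 - (i + 2) = -(1 : ZMod n) by ring]; exact neg_ne_zero.2 h1)
  -- sign equivalences
  have hμpos : ∀ i, (R i < dist (V (i + 2)) (O i) ↔ 0 < μ i) := by
    intro i
    constructor
    · intro h
      rcases (hμne i).lt_or_gt with h' | h'
      · nlinarith [keyA i, hd2 i, hR0 i, dist_nonneg (x := V (i + 2)) (y := O i)]
      · exact h'
    · intro h
      nlinarith [keyA i, hd2 i, hR0 i, dist_nonneg (x := V (i + 2)) (y := O i)]
  have hμneg : ∀ i, (dist (V (i + 2)) (O i) < R i ↔ μ i < 0) := by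
    intro i
    constructor
    · intro h
      rcases (hμne i).lt_or_gt with h' | h'
      · exact h'
      · nlinarith [keyA i, hd2 i, hR0 i, dist_nonneg (x := V (i + 2)) (y := O i)]
    · intro h
      nlinarith [keyA i, hd2 i, hR0 i, dist_nonneg (x := V (i + 2)) (y := O i)]
  have hνneg : ∀ i, (R (i + 1) < dist (V (i - 1)) (O (i + 1)) ↔ μ i < 0) := by
    intro i
    constructor
    · intro h
      rcases (hμne i).lt_or_gt with h' | h'
      · exact h'
      · nlinarith [keyB i, hdm i, hR0 (i + 1), dist_nonneg (x := V (i - 1)) (y := O (i + 1))]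
    · intro h
      nlinarith [keyB i, hdm i, hR0 (i + 1), dist_nonneg (x := V (i - 1)) (y := O (i + 1))]
  have hνpos : ∀ i, (dist (V (i - 1)) (O (i + 1)) < R (i + 1) ↔ 0 < μ i) := by
    intro i
    constructor
    · intro h
      rcases (hμne i).lt_or_gt with h' | h'
      · nlinarith [keyB i, hdm i, hR0 (i + 1), dist_nonneg (x := V (i - 1)) (y := O (i + 1))]
      · exact h'
    · intro h
      nlinarith [keyB i, hdm i, hR0 (i + 1), dist_nonneg (x := V (i - 1)) (y := O (i + 1))]
  -- local extremality ↔ sign change of μ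
  have hloc : ∀ i, ((LocMax V O R i ∨ LocMin V O R i) ↔ μ (i - 1) * μ i < 0) := by
    intro i
    have e1 : (R i < dist (V (i - 2)) (O i)) ↔ μ (i - 1) < 0 := by
      have := hνneg (i - 1)
      rwa [show i - 1 + 1 = i by ring, show i - 1 - 1 = i - 2 by ring] at this
    have e2 : (dist (V (i - 2)) (O i) < R i) ↔ 0 < μ (i - 1) := by
      have := hνpos (i - 1)
      rwa [show i - 1 + 1 = i by ring, show i - 1 - 1 = i - 2 by ring] at this
    rw [LocMax, LocMin, e1, e2, hμpos i, hμneg i, mul_neg_iff]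
    tauto
  -- the angle comparison
  have himV : ∀ i, 0 < (Kc (V i - V (i - 1)) (V (i + 1) - V i)).im := fun i => by
    rw [im_Kc_edges]; exact hdd i
  have hargV : ∀ i, Real.pi - leftAngle (V (i - 1)) (V i) (V (i + 1))
      = (Kc (V i - V (i - 1)) (V (i + 1) - V i)).arg := fun i =>
    turn_eq _ _ _ (ne_of_gt (hdd i))
  have hO0 : ∀ i, (O i - O (i - 1)) 0 = μ (i - 1) * (-(V i 1 - V (i - 1) 1)) := fun i => by
    have := hμ0 (i - 1); rwa [show i - 1 + 1 = i by ring] at this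
  have hO1 : ∀ i, (O i - O (i - 1)) 1 = μ (i - 1) * (V i 0 - V (i - 1) 0) := fun i => by
    have := hμ1 (i - 1); rwa [show i - 1 + 1 = i by ring] at this
  have hKO : ∀ i, Kc (O i - O (i - 1)) (O (i + 1) - O i)
      = ((μ (i - 1) * μ i : ℝ) : ℂ) * Kc (V i - V (i - 1)) (V (i + 1) - V i) := by
    intro i
    refine Kc_smulJ (μ (i - 1)) (μ i) (V i - V (i - 1)) (V (i + 1) - V i) _ _ ?_ ?_ ?_ ?_ <;>
      simp only [PiLp.sub_apply]
    · exact hO0 i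
    · exact hO1 i
    · exact hμ0 i
    · exact hμ1 i
  have hmulne : ∀ i, μ (i - 1) * μ i ≠ 0 := fun i => mul_ne_zero (hμne (i - 1)) (hμne i)
  have hdetO : ∀ i, det2 (O (i - 1)) (O i) (O (i + 1)) ≠ 0 := by
    intro i
    rw [← im_Kc_edges, hKO i]
    simp only [Complex.mul_im, Complex.ofReal_re, Complex.ofReal_im, zero_mul, add_zero]
    exact mul_ne_zero (hmulne i) (ne_of_gt (himV i))
  have hargO : ∀ i, Real.pi - leftAngle (O (i - 1)) (O i) (O (i + 1))
      = (if μ (i - 1) * μ i < 0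
          then (Kc (V i - V (i - 1)) (V (i + 1) - V i)).arg - Real.pi
          else (Kc (V i - V (i - 1)) (V (i + 1) - V i)).arg) := by
    intro i
    rw [turn_eq _ _ _ (hdetO i), hKO i, arg_real_mul' _ (hmulne i) _ (himV i)]
  have hdiff : ∀ i, (Real.pi - leftAngle (V (i - 1)) (V i) (V (i + 1)))
      - (Real.pi - leftAngle (O (i - 1)) (O i) (O (i + 1)))
      = if μ (i - 1) * μ i < 0 then Real.pi else 0 := by
    intro i
    rw [hargV i, hargO i]
    split <;> ring
  -- counting
  have hset : {i : ZMod n | LocMax V O R i ∨ LocMin V O R i}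
      = {i : ZMod n | μ (i - 1) * μ i < 0} := Set.ext hloc
  have hcard : ({i : ZMod n | LocMax V O R i ∨ LocMin V O R i}.ncard : ℝ)
      = ((Finset.univ.filter (fun i : ZMod n => μ (i - 1) * μ i < 0)).card : ℝ) := by
    rw [hset, Set.ncard_eq_toFinset_card', Set.toFinset_setOf]
  -- summation
  have hsum : (∑ i : ZMod n, (Real.pi - leftAngle (V (i - 1)) (V i) (V (i + 1))))
      - (∑ i : ZMod n, (Real.pi - leftAngle (O (i - 1)) (O i) (O (i + 1))))
      = Real.pi * ((Finset.univ.filter (fun i : ZMod n => μ (i - 1) * μ i < 0)).card : ℝ) := by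
    rw [← Finset.sum_sub_distrib]
    calc (∑ i : ZMod n, ((Real.pi - leftAngle (V (i - 1)) (V i) (V (i + 1)))
          - (Real.pi - leftAngle (O (i - 1)) (O i) (O (i + 1)))))
        = ∑ i : ZMod n, (if μ (i - 1) * μ i < 0 then Real.pi else 0) := by
          exact Finset.sum_congr rfl fun i _ => hdiff i
      _ = ∑ i ∈ Finset.univ.filter (fun i : ZMod n => μ (i - 1) * μ i < 0), Real.pi := by
          rw [Finset.sum_filter]
      _ = Real.pi * ((Finset.univ.filter (fun i : ZMod n => μ (i - 1) * μ i < 0)).card : ℝ) := by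
          rw [Finset.sum_const, nsmul_eq_mul, mul_comm]
  have hπ : Real.pi ≠ 0 := Real.pi_ne_zero
  have hfin : ∀ SV SO c : ℝ, SV - SO = Real.pi * c →
      c = 2 * (1 / (2 * Real.pi) * SV) - 2 * (1 / (2 * Real.pi) * SO) := by
    intro SV SO c h
    field_simp
    linear_combination (-1 : ℝ) * h
  rw [hcard, wind, wind]
  exact hfin _ _ _ hsum
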